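/- The function d_π is a metric on the unit interval [0,1]: for all x, y, z ∈ [0,1], d_π(x,y) = 0 if and only if x = y, d_π(x,y) = d_π(y,x), and d_π(x,y) ≤ d_π(x,z) + d_π(z,y). -/

import Mathlib

open unitInterval

/-- `d_π(x,y) = |x − y|/(1 − min{x,y})` for `x ≠ y`, and `d_π(x,x) = 0`. -/
noncomputable def dpi (x y : I) : ℝ :=
  if x = y then 0 else |(x : ℝ) - (y : ℝ)| / (1 - min (x : ℝ) (y : ℝ))

lemma Dr_symm (x y : ℝ) : |x - y| / (1 - min x y) = |y - x| / (1 - min y x) := by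
  rw [abs_sub_comm, min_comm]

lemma tri_lt (x y z : ℝ) (hx1 : x ≤ 1) (hy1 : y ≤ 1) (hz1 : z ≤ 1)
    (hxy : x < y) (hzx : z ≠ x) (hzy : z ≠ y) :
    |x - y| / (1 - min x y) ≤ |x - z| / (1 - min x z) + |z - y| / (1 - min z y) := by
  have h1x : 0 < 1 - x := by linarith
  rcases hzx.lt_or_gt with h1 | h1
  · -- z < x < y
    have h1z : 0 < 1 - z := by linarith
    rw [min_eq_left hxy.le, min_eq_right h1.le, min_eq_left (by linarith : z ≤ y),
      abs_of_neg (by linarith : x - y < 0), abs_of_pos (by linarith : 0 < x - z),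
      abs_of_neg (by linarith : z - y < 0), ← add_div,
      div_le_div_iff₀ h1x h1z]
    nlinarith [mul_nonneg (by linarith : (0:ℝ) ≤ x - z) (by linarith : (0:ℝ) ≤ 2 - x - y)]
  · rcases hzy.lt_or_gt with h2 | h2
    · -- x < z < y
      have h1z : 0 < 1 - z := by linarith
      rw [min_eq_left hxy.le, min_eq_left h1.le, min_eq_left h2.le,
        abs_of_neg (by linarith : x - y < 0), abs_of_neg (by linarith : x - z < 0),
        abs_of_neg (by linarith : z - y < 0), div_add_div _ _ (ne_of_gt h1x) (ne_of_gt h1z),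
        div_le_div_iff₀ h1x (by positivity)]
      nlinarith [mul_nonneg (mul_nonneg (by linarith : (0:ℝ) ≤ 1 - x)
        (by linarith : (0:ℝ) ≤ y - z)) (by linarith : (0:ℝ) ≤ z - x)]
    · -- x < y < z
      have h1y : 0 < 1 - y := by linarith
      rw [min_eq_left hxy.le, min_eq_left (by linarith : x ≤ z), min_eq_right h2.le,
        abs_of_neg (by linarith : x - y < 0), abs_of_neg (by linarith : x - z < 0),
        abs_of_pos (by linarith : 0 < z - y), div_add_div _ _ (ne_of_gt h1x) (ne_of_gt h1y),
        div_le_div_iff₀ h1x (by positivity)]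
      nlinarith [mul_nonneg (mul_nonneg (by linarith : (0:ℝ) ≤ 1 - x)
        (by linarith : (0:ℝ) ≤ z - y)) (by linarith : (0:ℝ) ≤ 2 - x - y)]

lemma Dr_tri (x y z : ℝ) (hx1 : x ≤ 1) (hy1 : y ≤ 1) (hz1 : z ≤ 1) :
    |x - y| / (1 - min x y) ≤ |x - z| / (1 - min x z) + |z - y| / (1 - min z y) := by
  have nn : ∀ a b : ℝ, a ≤ 1 → b ≤ 1 → 0 ≤ |a - b| / (1 - min a b) := by
    intro a b ha hb
    exact div_nonneg (abs_nonneg _) (by have := le_trans (min_le_left a b) ha; linarith)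
  rcases eq_or_ne x y with rfl | hxy
  · simpa using add_nonneg (nn x z hx1 hz1) (nn z x hz1 hx1)
  rcases eq_or_ne z x with rfl | hzx
  · simp
  rcases eq_or_ne z y with rfl | hzy
  · simp
  rcases hxy.lt_or_gt with h | h
  · exact tri_lt x y z hx1 hy1 hz1 h hzx hzy
  · rw [Dr_symm x y, Dr_symm x z, Dr_symm z y, add_comm]
    exact tri_lt y x z hy1 hx1 hz1 h hzy hzx

lemma dpi_eq (x y : I) : dpi x y = |(x : ℝ) - (y : ℝ)| / (1 - min (x : ℝ) (y : ℝ)) := by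
  unfold dpi
  split_ifs with h
  · simp [h]
  · rfl

/-- `d_π` is a metric on the unit interval `[0,1]`. -/
theorem dpi_is_metric :
    ∀ x y z : I,
      (dpi x y = 0 ↔ x = y) ∧
      dpi x y = dpi y x ∧
      dpi x y ≤ dpi x z + dpi z y := by
  intro x y z
  refine ⟨⟨?_, ?_⟩, ?_, ?_⟩
  · intro h
    by_contra hxy
    rw [dpi_eq] at h
    have hne : (x : ℝ) ≠ (y : ℝ) := fun hc => hxy (Subtype.ext hc)
    have hmin : min (x : ℝ) (y : ℝ) < 1 := by
      rcases hne.lt_or_gt with h' | h'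
      · exact min_lt_iff.2 (Or.inl (lt_of_lt_of_le h' y.2.2))
      · exact min_lt_iff.2 (Or.inr (lt_of_lt_of_le h' x.2.2))
    have : 0 < |(x : ℝ) - (y : ℝ)| / (1 - min (x : ℝ) (y : ℝ)) :=
      div_pos (abs_pos.2 (sub_ne_zero.2 hne)) (by linarith)
    linarith [h ▸ this]
  · intro h; simp [dpi, h]
  · rw [dpi_eq, dpi_eq, abs_sub_comm, min_comm]
  · rw [dpi_eq, dpi_eq, dpi_eq]
    exact Dr_tri _ _ _ x.2.2 y.2.2 z.2.2
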